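/- Let N : ℂ^k → ℂ^k be a 'normal' map, i.e. N = (N_1,...,N_{k-1},0) where each N_i is a polynomial in z_{i+1},...,z_k whose monomials z^α all satisfy |α| ≥ 2 and λ_i = α_{i+1} λ_{i+1} + ... + α_k λ_k (for fixed positive reals λ_1 ≥ ... ≥ λ_k). If A is an invertible diagonal linear map with entries a_1,...,a_k, then R = A + N is a bijection of ℂ^k and R^{-1} = A^{-1} + N' for some normal map N'. -/

import Mathlib

open Finset

/-- The set of `i`-resonant degrees for the exponents `lam`. -/
def ResDeg {k : ℕ} (lam : Fin (k + 1) → ℝ) (i : Fin (k + 1)) : Set (Fin (k + 1) → ℕ) :=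
  {α | 2 ≤ ∑ j, α j ∧ (∀ j, j ≤ i → α j = 0) ∧
    lam i = ∑ j, (if i < j then (α j : ℝ) * lam j else 0)}

/-- `N` is a normal map: each coordinate `N_i` is a linear combination of resonant
monomials `z^α` with `α ∈ ResDeg lam i` (the last coordinate is automatically `0`
since there are no resonant degrees for the last index). -/
def IsNormal {k : ℕ} (lam : Fin (k + 1) → ℝ)
    (N : (Fin (k + 1) → ℂ) → Fin (k + 1) → ℂ) : Prop :=
  ∃ (s : Finset (Fin (k + 1) → ℕ)) (c : Fin (k + 1) → (Fin (k + 1) → ℕ) → ℂ),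
    (∀ i α, c i α ≠ 0 → α ∈ ResDeg lam i) ∧
    ∀ z i, N z i = ∑ α ∈ s, c i α * ∏ j, z j ^ α j

namespace Stmt2Aux

open MvPolynomial

variable {k : ℕ} (lam : Fin (k + 1) → ℝ)

/-- weight of an exponent -/
def wt (d : Fin (k + 1) →₀ ℕ) : ℝ := ∑ j, (d j : ℝ) * lam j

/-- "good" exponents for index `i` -/
def Good (i : Fin (k + 1)) (d : Fin (k + 1) →₀ ℕ) : Prop :=
  1 ≤ ∑ j, d j ∧ lam i = wt lam d ∧ ∀ l, l < i → d l = 0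

lemma support_one' : (1 : MvPolynomial (Fin (k + 1)) ℂ).support = {0} := by
  rw [show (1 : MvPolynomial (Fin (k + 1)) ℂ) = MvPolynomial.monomial 0 1 by simp,
    MvPolynomial.support_monomial]
  simp

lemma wt_restrict {i : Fin (k + 1)} {d : Fin (k + 1) → ℕ} (h : ∀ j, j ≤ i → d j = 0) :
    ∑ j, (if i < j then (d j : ℝ) * lam j else 0) = ∑ j, (d j : ℝ) * lam j := by
  refine Finset.sum_congr rfl fun j _ => ?_
  by_cases hj : i < j
  · simp [hj]
  · simp [hj, h j (le_of_not_gt hj)]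

lemma resDeg_good {i : Fin (k + 1)} {d : Fin (k + 1) →₀ ℕ} (h : (⇑d) ∈ ResDeg lam i) :
    Good lam i d := by
  obtain ⟨h1, h2, h3⟩ := h
  refine ⟨le_trans (by norm_num) h1, ?_, fun l hl => h2 l hl.le⟩
  rw [h3, wt_restrict lam h2]; rfl

lemma wt_add (d1 d2 : Fin (k + 1) →₀ ℕ) : wt lam (d1 + d2) = wt lam d1 + wt lam d2 := by
  simp only [wt, Finsupp.add_apply]
  rw [← Finset.sum_add_distrib]
  refine Finset.sum_congr rfl fun j _ => ?_
  push_cast; ring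

lemma sum_coe_add (d1 d2 : Fin (k + 1) →₀ ℕ) :
    ∑ j, (d1 + d2) j = (∑ j, d1 j) + ∑ j, d2 j := by
  simp only [Finsupp.add_apply]
  rw [← Finset.sum_add_distrib]

lemma good_pow {j : Fin (k + 1)} {q : MvPolynomial (Fin (k + 1)) ℂ}
    (hq : ∀ d ∈ q.support, Good lam j d) (n : ℕ) :
    ∀ d ∈ (q ^ n).support,
      (∀ l, l < j → d l = 0) ∧ n ≤ ∑ l, d l ∧ (n : ℝ) * lam j = wt lam d := by
  induction n with
  | zero =>
    intro d hd
    rw [pow_zero] at hd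
    have : d = 0 := by
      rw [support_one'] at hd
      simpa using hd
    subst this
    simp [wt]
  | succ n IH =>
    intro d hd
    rw [pow_succ] at hd
    obtain ⟨d1, hd1, d2, hd2, hsum⟩ := Finset.mem_add.mp (MvPolynomial.support_mul _ _ hd)
    obtain ⟨e1, e2, e3⟩ := IH d1 hd1
    obtain ⟨f1, f2, f3⟩ := hq d2 hd2
    subst hsum
    refine ⟨fun l hl => ?_, ?_, ?_⟩
    · simp [Finsupp.add_apply, e1 l hl, f3 l hl]
    · rw [sum_coe_add]; omega
    · rw [wt_add, ← e3, ← f2]; push_cast; ring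

lemma good_prod {i : Fin (k + 1)} {q : Fin (k + 1) → MvPolynomial (Fin (k + 1)) ℂ}
    (hq : ∀ j, ∀ d ∈ (q j).support, Good lam j d) (α : Fin (k + 1) →₀ ℕ)
    (hα : ∀ j, α j ≠ 0 → i < j) (s : Finset (Fin (k + 1))) :
    ∀ d ∈ (∏ j ∈ s, q j ^ α j).support,
      (∀ l, l ≤ i → d l = 0) ∧ (∑ j ∈ s, α j) ≤ ∑ j, d j ∧
        (∑ j ∈ s, (α j : ℝ) * lam j) = wt lam d := by
  induction s using Finset.induction with
  | empty =>
    intro d hd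
    rw [Finset.prod_empty] at hd
    have : d = 0 := by
      rw [support_one'] at hd
      simpa using hd
    subst this
    simp [wt]
  | insert j s hj IH =>
    intro d hd
    rw [Finset.prod_insert hj] at hd
    obtain ⟨d1, hd1, d2, hd2, hsum⟩ := Finset.mem_add.mp (MvPolynomial.support_mul _ _ hd)
    obtain ⟨e1, e2, e3⟩ := IH d2 hd2
    have hd1' : (∀ l, l ≤ i → d1 l = 0) ∧ α j ≤ ∑ l, d1 l ∧ (α j : ℝ) * lam j = wt lam d1 := by
      by_cases hz : α j = 0
      · rw [hz, pow_zero] at hd1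
        have : d1 = 0 := by
          rw [support_one'] at hd1
          simpa using hd1
        subst this
        simp [wt, hz]
      · obtain ⟨g1, g2, g3⟩ := good_pow lam (hq j) (α j) d1 hd1
        exact ⟨fun l hl => g1 l (lt_of_le_of_lt hl (hα j hz)), g2, g3⟩
    subst hsum
    rw [Finset.sum_insert hj, Finset.sum_insert hj, sum_coe_add, wt_add]
    exact ⟨fun l hl => by simp [Finsupp.add_apply, hd1'.1 l hl, e1 l hl],
      by have := hd1'.2.1; omega, by rw [← hd1'.2.2, ← e3]⟩

lemma eval₂_congr_gt {S : Type*} [CommSemiring S] (φ : ℂ →+* S) {i : Fin (k + 1)}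
    {p : MvPolynomial (Fin (k + 1)) ℂ} (hp : ∀ d ∈ p.support, ∀ j : Fin (k + 1), j ≤ i → d j = 0)
    {f g : Fin (k + 1) → S} (hfg : ∀ j, i < j → f j = g j) :
    MvPolynomial.eval₂ φ f p = MvPolynomial.eval₂ φ g p := by
  rw [MvPolynomial.eval₂_eq', MvPolynomial.eval₂_eq']
  refine Finset.sum_congr rfl fun d hd => ?_
  congr 1
  refine Finset.prod_congr rfl fun j _ => ?_
  by_cases hj : i < j
  · rw [hfg j hj]
  · rw [hp d hd j (le_of_not_gt hj)]; simp

lemma res_eval₂ {i : Fin (k + 1)} {p : MvPolynomial (Fin (k + 1)) ℂ}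
    (hp : ∀ d ∈ p.support, (⇑d) ∈ ResDeg lam i)
    {q : Fin (k + 1) → MvPolynomial (Fin (k + 1)) ℂ}
    (hq : ∀ j, ∀ d ∈ (q j).support, Good lam j d) :
    ∀ d ∈ (MvPolynomial.eval₂ MvPolynomial.C q p).support, (⇑d) ∈ ResDeg lam i := by
  intro d hd
  rw [MvPolynomial.eval₂_eq'] at hd
  obtain ⟨α, hα, hd2⟩ := Finset.mem_biUnion.mp (MvPolynomial.support_sum hd)
  obtain ⟨h1, h2, h3⟩ := hp α hα
  have hd3 : d ∈ (∏ j, q j ^ α j).support := by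
    have := MvPolynomial.support_smul (a := MvPolynomial.coeff α p)
      (f := ∏ j, q j ^ α j)
    rw [MvPolynomial.smul_eq_C_mul] at this
    exact this hd2
  obtain ⟨g1, g2, g3⟩ := good_prod lam hq α (fun j hj => lt_of_not_ge fun hle => hj (h2 j hle))
    Finset.univ d hd3
  refine ⟨le_trans h1 g2, fun j hj => g1 j hj, ?_⟩
  have hwt : wt lam d = ∑ j, (d j : ℝ) * lam j := rfl
  rw [wt_restrict lam fun j hj => g1 j hj, ← hwt, ← g3, ← wt_restrict lam h2]
  exact h3

/-- The coordinates of the inverse, as polynomials, by downward recursion. -/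
noncomputable def invQ (a : Fin (k + 1) → ℂ) (p : Fin (k + 1) → MvPolynomial (Fin (k + 1)) ℂ)
    (i : Fin (k + 1)) : MvPolynomial (Fin (k + 1)) ℂ :=
  MvPolynomial.C (a i)⁻¹ * (MvPolynomial.X i -
    MvPolynomial.eval₂ MvPolynomial.C
      (fun j => if h : i < j then invQ a p j else 0) (p i))
termination_by k - i.val
decreasing_by
  have h1 : (i : ℕ) < (j : ℕ) := h
  have h2 : (j : ℕ) ≤ k := j.is_le
  omega

lemma single_good (i : Fin (k + 1)) : Good lam i (Finsupp.single i 1) := by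
  refine ⟨?_, ?_, fun l hl => Finsupp.single_eq_of_ne' (ne_of_gt hl)⟩
  · rw [Finset.sum_eq_single i (fun b _ hb => Finsupp.single_eq_of_ne' (Ne.symm hb))
      (by simp)]
    simp
  · show lam i = ∑ j, ((Finsupp.single i 1 : Fin (k + 1) →₀ ℕ) j : ℝ) * lam j
    rw [Finset.sum_eq_single i
      (fun b _ hb => by rw [Finsupp.single_eq_of_ne' (Ne.symm hb)]; simp) (by simp)]
    simp

lemma good_invQ (a : Fin (k + 1) → ℂ) (p : Fin (k + 1) → MvPolynomial (Fin (k + 1)) ℂ)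
    (hp : ∀ i, ∀ d ∈ (p i).support, (⇑d) ∈ ResDeg lam i) :
    ∀ i, ∀ d ∈ (invQ a p i).support, Good lam i d := by
  have key : ∀ n : ℕ, ∀ i : Fin (k + 1), k - i.val < n →
      ∀ d ∈ (invQ a p i).support, Good lam i d := by
    intro n
    induction n with
    | zero => intro i hi; omega
    | succ n IH =>
      intro i hi d hd
      rw [invQ] at hd
      rw [← MvPolynomial.smul_eq_C_mul] at hd
      have hd2 := MvPolynomial.support_smul hd
      rcases Finset.mem_union.mp (MvPolynomial.support_sub _ _ _ hd2) with h | h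
      · rw [MvPolynomial.support_X] at h
        rw [Finset.mem_singleton] at h
        subst h
        exact single_good lam i
      · have hq : ∀ j, ∀ e ∈ ((fun j => if h : i < j then invQ a p j else 0) j).support,
            Good lam j e := by
          intro j e he
          have he' : e ∈ (if h : i < j then invQ a p j else 0).support := he
          by_cases hij : i < j
          · rw [dif_pos hij] at he'
            refine IH j ?_ e he'
            have h1 : (i : ℕ) < (j : ℕ) := hij
            have h2 : (j : ℕ) ≤ k := j.is_le
            omega
          · rw [dif_neg hij] at he'
            simp at he'
        exact resDeg_good lam (res_eval₂ lam (hp i) hq d h)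
  intro i
  exact key (k + 1) i (by omega)

end Stmt2Aux

/-- If `N` is normal and `A = diag(a_1,...,a_k)` is invertible, then `R = A + N` is a
bijection of `ℂ^k` and `R⁻¹ = A⁻¹ + N'` for some normal map `N'`. -/
theorem stmt2 {k : ℕ} (lam : Fin (k + 1) → ℝ) (hpos : ∀ i, 0 < lam i)
    (hmono : ∀ i j : Fin (k + 1), i ≤ j → lam j ≤ lam i)
    (N : (Fin (k + 1) → ℂ) → Fin (k + 1) → ℂ) (hN : IsNormal lam N)
    (a : Fin (k + 1) → ℂ) (ha : ∀ i, a i ≠ 0) :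
    Function.Bijective (fun z (i : Fin (k + 1)) => a i * z i + N z i) ∧
      ∃ N' : (Fin (k + 1) → ℂ) → Fin (k + 1) → ℂ, IsNormal lam N' ∧
        (∀ w : Fin (k + 1) → ℂ,
          (fun (i : Fin (k + 1)) =>
              a i * ((a i)⁻¹ * w i + N' w i) + N (fun j => (a j)⁻¹ * w j + N' w j) i) = w) ∧
        (∀ z : Fin (k + 1) → ℂ,
          (fun (i : Fin (k + 1)) =>
              (a i)⁻¹ * (a i * z i + N z i) + N' (fun j => a j * z j + N z j) i) = z) := by
  classical
  open MvPolynomial Stmt2Aux in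
  obtain ⟨s, c, hc, hNf⟩ := hN
  -- the polynomials representing N
  set p : Fin (k + 1) → MvPolynomial (Fin (k + 1)) ℂ :=
    fun i => ∑ α ∈ s, MvPolynomial.monomial (Finsupp.equivFunOnFinite.symm α) (c i α) with hp_def
  have hp_res : ∀ i, ∀ d ∈ (p i).support, (⇑d) ∈ ResDeg lam i := by
    intro i d hd
    rw [hp_def] at hd
    obtain ⟨α, hα, hd2⟩ := Finset.mem_biUnion.mp (MvPolynomial.support_sum hd)
    rw [MvPolynomial.support_monomial] at hd2
    by_cases hz : c i α = 0
    · rw [if_pos hz] at hd2; simp at hd2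
    · rw [if_neg hz] at hd2
      rw [Finset.mem_singleton] at hd2
      subst hd2
      simpa using hc i α hz
  have hp_supp : ∀ i, ∀ d ∈ (p i).support, ∀ j : Fin (k + 1), j ≤ i → d j = 0 :=
    fun i d hd => (hp_res i d hd).2.1
  have hNp : ∀ z i, N z i = MvPolynomial.eval z (p i) := by
    intro z i
    rw [hNf z i, hp_def]
    rw [map_sum]
    refine Finset.sum_congr rfl fun α _ => ?_
    rw [MvPolynomial.eval_monomial, Finsupp.prod_pow]
    simp
  -- the inverse map
  set q : Fin (k + 1) → MvPolynomial (Fin (k + 1)) ℂ := invQ a p with hq_def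
  have hq_good : ∀ i, ∀ d ∈ (q i).support, Good lam i d := good_invQ lam a p hp_res
  set g : (Fin (k + 1) → ℂ) → Fin (k + 1) → ℂ := fun w i => MvPolynomial.eval w (q i)
    with hg_def
  -- N z i only depends on z j for j > i
  have Ndep : ∀ z z' : Fin (k + 1) → ℂ, ∀ i, (∀ j, i < j → z j = z' j) → N z i = N z' i := by
    intro z z' i h
    rw [hNp z i, hNp z' i, ← MvPolynomial.eval₂_id (g := z), ← MvPolynomial.eval₂_id (g := z')]
    exact eval₂_congr_gt (RingHom.id ℂ) (hp_supp i) h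
  -- injectivity
  have hinj : Function.Injective (fun z (i : Fin (k + 1)) => a i * z i + N z i) := by
    intro z z' h
    have key : ∀ n : ℕ, ∀ i : Fin (k + 1), k - i.val < n → z i = z' i := by
      intro n
      induction n with
      | zero => intro i hi; omega
      | succ n IH =>
        intro i hi
        have hNe : N z i = N z' i := by
          refine Ndep z z' i fun j hj => IH j ?_
          have h1 : (i : ℕ) < (j : ℕ) := hj
          have h2 : (j : ℕ) ≤ k := j.is_le
          omega
        have hzi : a i * z i + N z i = a i * z' i + N z' i := congrFun h i
        rw [hNe] at hzi
        have := add_right_cancel hzi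
        exact mul_left_cancel₀ (ha i) this
    funext i
    exact key (k + 1) i (by omega)
  -- the key identity: R ∘ g = id
  have hRg : ∀ w : Fin (k + 1) → ℂ, ∀ i, a i * g w i + N (g w) i = w i := by
    intro w i
    have hE : MvPolynomial.eval₂ MvPolynomial.C
        (fun j => if h : i < j then q j else 0) (p i) =
        MvPolynomial.eval₂ MvPolynomial.C q (p i) :=
      eval₂_congr_gt MvPolynomial.C (hp_supp i) fun j hj => dif_pos hj
    have hqi : q i = MvPolynomial.C (a i)⁻¹ * (MvPolynomial.X i -
        MvPolynomial.eval₂ MvPolynomial.C q (p i)) := by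
      rw [hq_def, invQ, hE]
    have hNg : N (g w) i = MvPolynomial.eval w (MvPolynomial.eval₂ MvPolynomial.C q (p i)) := by
      rw [hNp (g w) i, MvPolynomial.eval_eval₂]
      rw [show ((MvPolynomial.eval w).comp MvPolynomial.C) = RingHom.id ℂ by
        ext x; simp]
      rw [MvPolynomial.eval₂_id]
    rw [hNg, hg_def]
    have : a i * MvPolynomial.eval w (q i) =
        MvPolynomial.eval w (MvPolynomial.C (a i) * q i) := by simp
    rw [this, hqi]
    rw [show MvPolynomial.C (a i) * (MvPolynomial.C (a i)⁻¹ * (MvPolynomial.X i -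
        MvPolynomial.eval₂ MvPolynomial.C q (p i))) = MvPolynomial.X i -
        MvPolynomial.eval₂ MvPolynomial.C q (p i) by
      rw [← mul_assoc, ← map_mul, mul_inv_cancel₀ (ha i), map_one, one_mul]]
    rw [map_sub]
    simp
  have hsurj : Function.Surjective (fun z (i : Fin (k + 1)) => a i * z i + N z i) := by
    intro w
    exact ⟨g w, funext fun i => hRg w i⟩
  -- the residual polynomials
  set r : Fin (k + 1) → MvPolynomial (Fin (k + 1)) ℂ :=
    fun i => q i - MvPolynomial.C (a i)⁻¹ * MvPolynomial.X i with hr_def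
  have hr_eq : ∀ i, r i = -(MvPolynomial.C (a i)⁻¹ *
      MvPolynomial.eval₂ MvPolynomial.C
        (fun j => if h : i < j then q j else 0) (p i)) := by
    intro i
    rw [hr_def]
    show q i - _ = _
    rw [hq_def, invQ]
    ring
  have hr_res : ∀ i, ∀ d ∈ (r i).support, (⇑d) ∈ ResDeg lam i := by
    intro i d hd
    rw [hr_eq i] at hd
    rw [MvPolynomial.support_neg, ← MvPolynomial.smul_eq_C_mul] at hd
    have hd2 := MvPolynomial.support_smul hd
    have hq' : ∀ j, ∀ e ∈ ((fun j => if h : i < j then q j else 0) j).support,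
        Good lam j e := by
      intro j e he
      have he' : e ∈ (if h : i < j then q j else 0).support := he
      by_cases hij : i < j
      · rw [dif_pos hij] at he'; exact hq_good j e he'
      · rw [dif_neg hij] at he'; simp at he'
    exact res_eval₂ lam (hp_res i) hq' d hd2
  set N' : (Fin (k + 1) → ℂ) → Fin (k + 1) → ℂ := fun w i => MvPolynomial.eval w (r i)
    with hN'_def
  have hgN' : ∀ w : Fin (k + 1) → ℂ, ∀ i, (a i)⁻¹ * w i + N' w i = g w i := by
    intro w i
    rw [hN'_def]
    show (a i)⁻¹ * w i + MvPolynomial.eval w (r i) = _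
    rw [hr_def]
    show _ + MvPolynomial.eval w (q i - MvPolynomial.C (a i)⁻¹ * MvPolynomial.X i) = _
    rw [map_sub, map_mul, MvPolynomial.eval_C, MvPolynomial.eval_X]
    ring
  -- IsNormal N'
  have hN'normal : IsNormal lam N' := by
    refine ⟨Finset.univ.biUnion fun i => (r i).support.image
      (fun d : Fin (k + 1) →₀ ℕ => (⇑d : Fin (k + 1) → ℕ)),
      fun i α => MvPolynomial.coeff (Finsupp.equivFunOnFinite.symm α) (r i), ?_, ?_⟩
    · intro i α hne
      have hmem : Finsupp.equivFunOnFinite.symm α ∈ (r i).support :=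
        MvPolynomial.mem_support_iff.mpr hne
      have := hr_res i _ hmem
      simpa using this
    · intro w i
      rw [hN'_def]
      show MvPolynomial.eval w (r i) = _
      rw [MvPolynomial.eval_eq']
      have himg : ∑ α ∈ (r i).support.image (fun d : Fin (k + 1) →₀ ℕ => (⇑d : Fin (k + 1) → ℕ)),
          MvPolynomial.coeff (Finsupp.equivFunOnFinite.symm α) (r i) * ∏ j, w j ^ α j
          = ∑ d ∈ (r i).support, MvPolynomial.coeff d (r i) * ∏ j, w j ^ d j := by
        rw [Finset.sum_image (fun x _ y _ h => DFunLike.coe_injective h)]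
        refine Finset.sum_congr rfl fun d _ => ?_
        simp
      rw [← himg]
      refine Finset.sum_subset (Finset.subset_biUnion_of_mem (fun i => (r i).support.image (fun d : Fin (k + 1) →₀ ℕ => (⇑d : Fin (k + 1) → ℕ))) (Finset.mem_univ i)) ?_
      intro α hα hnmem
      have hz0 : MvPolynomial.coeff (Finsupp.equivFunOnFinite.symm α) (r i) = 0 := by
        by_contra hne
        refine hnmem (Finset.mem_image.mpr ⟨Finsupp.equivFunOnFinite.symm α,
          MvPolynomial.mem_support_iff.mpr hne, rfl⟩)
      rw [hz0, zero_mul]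
  refine ⟨⟨hinj, hsurj⟩, N', hN'normal, ?_, ?_⟩
  · intro w
    funext i
    have h1 : (fun j => (a j)⁻¹ * w j + N' w j) = g w := funext fun j => hgN' w j
    rw [h1, hgN' w i]
    exact hRg w i
  · intro z
    have hz : g (fun i => a i * z i + N z i) = z := by
      apply hinj
      funext i
      exact hRg (fun i => a i * z i + N z i) i
    funext i
    exact (hgN' (fun j => a j * z j + N z j) i).trans (congrFun hz i)
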